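/- Every weakly Hausdorff topologically compact generalized topological space is weakly normal, provable in ZF. -/

import Mathlib

open Set TopologicalSpace Topology

universe u

/-- A generalized topology in the sense of Delfs–Knebusch (axioms following
Piękosz, Definition 2.2.1): `Cov` is the collection of admissible open families,
and the open sets are the members of `⋃₀ Cov`. -/
structure GenTop (X : Type u) : Type u where
  Cov : Set (Set (Set X))
  univ_open : Set.univ ∈ ⋃₀ Cov
  finite_admissible : ∀ 𝒰 : Set (Set X), 𝒰.Finite → 𝒰 ⊆ ⋃₀ Cov → 𝒰 ∈ Cov
  union_open : ∀ 𝒰 ∈ Cov, ⋃₀ 𝒰 ∈ ⋃₀ Cov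
  restrict : ∀ 𝒰 ∈ Cov, ∀ V ∈ ⋃₀ Cov, (fun U => V ∩ U) '' 𝒰 ∈ Cov
  transitive : ∀ 𝒰 ∈ Cov, ∀ f : Set X → Set (Set X),
    (∀ U ∈ 𝒰, f U ∈ Cov ∧ ⋃₀ f U = U) → {V : Set X | ∃ U ∈ 𝒰, V ∈ f U} ∈ Cov
  coarsen : ∀ 𝒰 ∈ Cov, ∀ 𝒱 ⊆ ⋃₀ Cov, (∀ U ∈ 𝒰, ∃ V ∈ 𝒱, U ⊆ V) →
    ⋃₀ 𝒱 = ⋃₀ 𝒰 → 𝒱 ∈ Cov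
  regular : ∀ 𝒰 ∈ Cov, ∀ W ⊆ ⋃₀ 𝒰, (∀ U ∈ 𝒰, W ∩ U ∈ ⋃₀ Cov) → W ∈ ⋃₀ Cov

namespace GenTop

variable {X : Type u} (G : GenTop X)

/-- The open sets of a gts. -/
def Opens : Set (Set X) := ⋃₀ G.Cov

/-- The closed sets of a gts. -/
def Closeds : Set (Set X) := {A : Set X | Aᶜ ∈ G.Opens}

/-- The topologization of a gts: the topology generated by the open sets. -/
def topol : TopologicalSpace X := TopologicalSpace.generateFrom G.Opens

/-- A gts is weakly normal if disjoint sets, each a singleton or closed,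
can be separated by disjoint open sets. -/
def WeaklyNormal : Prop :=
  ∀ A₁ A₂ : Set X, ((∃ x, A₁ = {x}) ∨ A₁ ∈ G.Closeds) →
    ((∃ x, A₂ = {x}) ∨ A₂ ∈ G.Closeds) → Disjoint A₁ A₂ →
    ∃ W₁ ∈ G.Opens, ∃ W₂ ∈ G.Opens, Disjoint W₁ W₂ ∧ A₁ ⊆ W₁ ∧ A₂ ⊆ W₂

end GenTop

namespace GenTopAux

variable {X : Type u} (G : GenTop X)

lemma opens_univ : Set.univ ∈ G.Opens := G.univ_open

lemma opens_empty : (∅ : Set X) ∈ G.Opens := by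
  have h : (∅ : Set (Set X)) ∈ G.Cov :=
    G.finite_admissible ∅ Set.finite_empty (empty_subset _)
  simpa [GenTop.Opens] using G.union_open ∅ h

lemma opens_inter {U V : Set X} (hU : U ∈ G.Opens) (hV : V ∈ G.Opens) :
    U ∩ V ∈ G.Opens := by
  have hV' : ({V} : Set (Set X)) ∈ G.Cov :=
    G.finite_admissible {V} (Set.finite_singleton _) (by simpa [GenTop.Opens] using hV)
  have := G.restrict {V} hV' U hU
  exact ⟨_, this, ⟨V, rfl, rfl⟩⟩

lemma opens_union {U V : Set X} (hU : U ∈ G.Opens) (hV : V ∈ G.Opens) :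
    U ∪ V ∈ G.Opens := by
  have h : ({U, V} : Set (Set X)) ∈ G.Cov := by
    refine G.finite_admissible _ (Set.toFinite _) ?_
    intro W hW
    rcases hW with rfl | rfl
    · exact hU
    · exact hV
  simpa [Set.sUnion_pair, GenTop.Opens] using G.union_open _ h

lemma opens_biInter {ι : Type*} (t : Finset ι) (f : ι → Set X)
    (h : ∀ i ∈ t, f i ∈ G.Opens) : (⋂ i ∈ t, f i) ∈ G.Opens := by
  classical
  induction t using Finset.induction_on with
  | empty => simpa using opens_univ G
  | insert _ _ hx ih =>
    rw [Finset.set_biInter_insert]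
    exact opens_inter G (h _ (Finset.mem_insert_self _ _))
      (ih fun i hi => h i (Finset.mem_insert_of_mem hi))

lemma opens_biUnion {ι : Type*} (t : Finset ι) (f : ι → Set X)
    (h : ∀ i ∈ t, f i ∈ G.Opens) : (⋃ i ∈ t, f i) ∈ G.Opens := by
  classical
  induction t using Finset.induction_on with
  | empty => simpa using opens_empty G
  | insert _ _ hx ih =>
    rw [Finset.set_biUnion_insert]
    exact opens_union G (h _ (Finset.mem_insert_self _ _))
      (ih fun i hi => h i (Finset.mem_insert_of_mem hi))

lemma opens_isOpen {U : Set X} (hU : U ∈ G.Opens) :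
    @IsOpen X G.topol U :=
  TopologicalSpace.GenerateOpen.basic U hU

lemma basis : @TopologicalSpace.IsTopologicalBasis X G.topol G.Opens := by
  letI := G.topol
  refine ⟨?_, ?_, rfl⟩
  · intro U hU V hV x hx
    exact ⟨U ∩ V, opens_inter G hU hV, hx, subset_rfl⟩
  · exact Set.eq_univ_of_univ_subset (Set.subset_sUnion_of_mem (opens_univ G))

/-- Key combinatorial lemma: if a compact set `K` can be pointwise separated
from a set `S` by disjoint gts-open sets, then it can be separated uniformly. -/
lemma sep_aux (S K : Set X) (hK : @IsCompact X G.topol K)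
    (hsep : ∀ a ∈ K, ∃ u ∈ G.Opens, ∃ v ∈ G.Opens, Disjoint u v ∧ S ⊆ u ∧ a ∈ v) :
    ∃ U ∈ G.Opens, ∃ W ∈ G.Opens, Disjoint U W ∧ S ⊆ U ∧ K ⊆ W := by
  classical
  letI := G.topol
  choose! u hu v hv hdis hSu hav using hsep
  have hcover : K ⊆ ⋃ a : K, v a := fun a ha => Set.mem_iUnion.2 ⟨⟨a, ha⟩, hav a ha⟩
  obtain ⟨t, ht⟩ := hK.elim_finite_subcover (fun a : K => v a)
    (fun a => opens_isOpen G (hv a a.2)) hcover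
  refine ⟨⋂ a ∈ t, u a, opens_biInter G t _ (fun a _ => hu a a.2),
    ⋃ a ∈ t, v a, opens_biUnion G t _ (fun a _ => hv a a.2), ?_, ?_, ht⟩
  · rw [Set.disjoint_iff_inter_eq_empty]
    ext x
    simp only [Set.mem_inter_iff, Set.mem_iInter, Set.mem_iUnion, Set.mem_empty_iff_false,
      iff_false, not_and]
    rintro hx ⟨a, hat, hxa⟩
    exact (hdis a a.2).le_bot ⟨hx a hat, hxa⟩
  · exact fun x hx => Set.mem_iInter₂.2 fun a _ => hSu a a.2 hx

lemma sep_point_compact (h2 : @T2Space X G.topol) {x : X} {K : Set X}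
    (hK : @IsCompact X G.topol K) (hx : x ∉ K) :
    ∃ U ∈ G.Opens, ∃ W ∈ G.Opens, Disjoint U W ∧ x ∈ U ∧ K ⊆ W := by
  letI := G.topol
  obtain ⟨U, hU, W, hW, hd, hxU, hKW⟩ :=
    sep_aux G {x} K hK (by
      intro a ha
      have hxa : x ≠ a := fun h => hx (h ▸ ha)
      obtain ⟨U, V, hUo, hVo, hxU, haV, hUV⟩ := t2_separation hxa
      obtain ⟨u, hu, hxu, huU⟩ := (basis G).exists_subset_of_mem_open hxU hUo
      obtain ⟨v, hv, hav, hvV⟩ := (basis G).exists_subset_of_mem_open haV hVo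
      exact ⟨u, hu, v, hv, hUV.mono huU hvV, Set.singleton_subset_iff.2 hxu, hav⟩)
  exact ⟨U, hU, W, hW, hd, hxU rfl, hKW⟩

lemma sep_compact_compact (h2 : @T2Space X G.topol) {K₁ K₂ : Set X}
    (hK₁ : @IsCompact X G.topol K₁) (hK₂ : @IsCompact X G.topol K₂)
    (hd : Disjoint K₁ K₂) :
    ∃ U ∈ G.Opens, ∃ W ∈ G.Opens, Disjoint U W ∧ K₁ ⊆ U ∧ K₂ ⊆ W := by
  refine sep_aux G K₁ K₂ hK₂ ?_
  intro a ha
  have hax : a ∉ K₁ := fun h => hd.le_bot ⟨h, ha⟩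
  obtain ⟨U, hU, W, hW, hdis, haU, hKW⟩ := sep_point_compact G h2 hK₁ hax
  exact ⟨W, hW, U, hU, hdis.symm, hKW, haU⟩

end GenTopAux

/-- Every weakly Hausdorff topologically compact gts is weakly normal. -/
theorem stmt_8 {X : Type u} (G : GenTop X) (h2 : @T2Space X G.topol)
    (hc : @CompactSpace X G.topol) : G.WeaklyNormal := by
  letI := G.topol
  intro A₁ A₂ h1 h2' hdisj
  have hclosed : ∀ A : Set X, ((∃ x, A = {x}) ∨ A ∈ G.Closeds) → IsClosed A := by
    rintro A (⟨x, rfl⟩ | hA)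
    · exact isClosed_singleton
    · exact ⟨GenTopAux.opens_isOpen G hA⟩
  have hK₁ : IsCompact A₁ := (hclosed A₁ h1).isCompact
  have hK₂ : IsCompact A₂ := (hclosed A₂ h2').isCompact
  exact GenTopAux.sep_compact_compact G h2 hK₁ hK₂ hdisj
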